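/- arXiv:0811.1793 — 2 statements merged into one kernel-verified Lean document; each statement's English description precedes it below -/
import Mathlib

section
/- Let f be a self-reciprocal monic polynomial of even degree N over F_ℓ (ℓ an odd prime), and write f(x) = x^{N/2} h(x + x⁻¹) with h monic of degree N/2. If f is irreducible over F_ℓ, then h is irreducible over F_ℓ and h(2)·h(−2) is a nonsquare in F_ℓ. -/
open Polynomial Finset IntermediateField

set_option maxHeartbeats 1000000
set_option synthInstance.maxHeartbeats 400000

section Aux
variable (q : ℕ) [Fact q.Prime] (L : Type*) [Field L] [Algebra (ZMod q) L]
noncomputable def frobAlg (d : ℕ) : L →ₐ[ZMod q] L :=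
  haveI : CharP L q := charP_of_injective_algebraMap' (ZMod q) (A := L) q
  { toFun := fun x => x ^ q ^ d
    map_one' := one_pow _
    map_mul' := fun x y => mul_pow x y _
    map_zero' := zero_pow (pow_ne_zero d (Fact.out : q.Prime).ne_zero)
    map_add' := fun x y => add_pow_char_pow x y q d
    commutes' := fun c => by
      show (algebraMap (ZMod q) L c) ^ q ^ d = algebraMap (ZMod q) L c
      rw [← map_pow, ZMod.pow_card_pow] }
lemma frobAlg_apply (d : ℕ) (x : L) : frobAlg q L d x = x ^ q ^ d := rfl
lemma map_minpoly_eq_prod [Fintype L] (m : ℕ) (hm : 0 < m) (b : L)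
    (h : (ZMod q)[X]) (hmonic : h.Monic) (hdeg : h.natDegree = m)
    (hmin : minpoly (ZMod q) b = h) (hcard : Fintype.card L = q ^ m)
    (htop : Algebra.adjoin (ZMod q) ({b} : Set L) = ⊤) :
    (∀ i < m, ∀ j < m, i ≠ j → b ^ q ^ i ≠ b ^ q ^ j) ∧
      h.map (algebraMap (ZMod q) L) = ∏ i ∈ range m, (X - C (b ^ q ^ i)) := by
  classical
  have hq1 : 1 < q := (Fact.out : q.Prime).one_lt
  -- key: no proper period
  have key : ∀ d, 0 < d → d < m → b ^ q ^ d ≠ b := by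
    intro d hd0 hdm hbd
    have hψ : ∀ x : L, x ^ q ^ d = x := by
      intro x
      have hle : Algebra.adjoin (ZMod q) ({b} : Set L) ≤
          AlgHom.equalizer (frobAlg q L d) (AlgHom.id (ZMod q) L) := by
        apply Algebra.adjoin_le
        intro y hy
        rcases hy with rfl
        exact hbd
      have hx : x ∈ Algebra.adjoin (ZMod q) ({b} : Set L) := htop ▸ Algebra.mem_top
      exact hle hx
    set p : L[X] := X ^ q ^ d - X with hp
    have hqd1 : 1 < q ^ d := Nat.one_lt_pow hd0.ne' hq1
    have hpd : p.natDegree = q ^ d := by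
      have hlt : natDegree (X : L[X]) < natDegree (X ^ q ^ d : L[X]) := by
        rw [natDegree_X, natDegree_X_pow]; exact hqd1
      rw [hp, natDegree_sub_eq_left_of_natDegree_lt hlt, natDegree_X_pow]
    have hp0 : p ≠ 0 := fun h0 => by rw [h0, natDegree_zero] at hpd; omega
    have hsub : (Finset.univ : Finset L) ⊆ p.roots.toFinset := by
      intro x _
      rw [Multiset.mem_toFinset, mem_roots hp0]
      simp [hp, IsRoot, hψ x]
    have hle : Fintype.card L ≤ q ^ d := by
      calc Fintype.card L = (Finset.univ : Finset L).card := Finset.card_univ.symm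
        _ ≤ p.roots.toFinset.card := Finset.card_le_card hsub
        _ ≤ Multiset.card p.roots := p.roots.toFinset_card_le
        _ ≤ p.natDegree := p.card_roots'
        _ = q ^ d := hpd
    rw [hcard] at hle
    exact absurd hle (not_le.mpr (Nat.pow_lt_pow_right hq1 hdm))
  have hdist : ∀ i < m, ∀ j < m, i ≠ j → b ^ q ^ i ≠ b ^ q ^ j := by
    suffices H : ∀ i j, i < j → j < m → b ^ q ^ i ≠ b ^ q ^ j by
      intro i hi j hj hij
      rcases lt_or_gt_of_ne hij with hlt | hgt
      · exact H i j hlt hj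
      · exact fun e => H j i hgt hi e.symm
    intro i j hij hjm heq
    have h1 : b ^ q ^ (i + (m - j)) = b := by
      have h2 : (b ^ q ^ i) ^ q ^ (m - j) = (b ^ q ^ j) ^ q ^ (m - j) := by rw [heq]
      rw [← pow_mul, ← pow_mul, ← pow_add, ← pow_add] at h2
      have hjm' : j + (m - j) = m := by omega
      rw [hjm'] at h2
      rw [h2, ← hcard, FiniteField.pow_card]
    exact key (i + (m - j)) (by omega) (by omega) h1
  refine ⟨hdist, ?_⟩
  have hroots : ∀ i, (h.map (algebraMap (ZMod q) L)).IsRoot (b ^ q ^ i) := by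
    intro i
    have h0 : aeval b h = 0 := by rw [← hmin]; exact minpoly.aeval _ _
    have h1 : aeval (frobAlg q L i b) h = 0 := by
      rw [aeval_algHom_apply, h0, map_zero]
    rw [frobAlg_apply] at h1
    rwa [IsRoot, eval_map, ← aeval_def]
  have hPdvd : (∏ i ∈ range m, (X - C (b ^ q ^ i))) ∣ h.map (algebraMap (ZMod q) L) := by
    apply Finset.prod_dvd_of_coprime
    · intro i hi j hj hij
      exact isCoprime_X_sub_C_of_isUnit_sub
        (IsUnit.mk0 _ (sub_ne_zero_of_ne
          (hdist i (mem_range.mp hi) j (mem_range.mp hj) hij)))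
    · intro i _
      exact dvd_iff_isRoot.mpr (hroots i)
  have hPmonic : (∏ i ∈ range m, (X - C (b ^ q ^ i))).Monic :=
    monic_prod_of_monic _ _ fun i _ => monic_X_sub_C _
  have hPdeg : (∏ i ∈ range m, (X - C (b ^ q ^ i))).natDegree = m := by
    rw [natDegree_prod_of_monic _ _ fun i _ => monic_X_sub_C _]
    simp only [natDegree_X_sub_C, Finset.sum_const, card_range, smul_eq_mul, mul_one]
  have hmap : (h.map (algebraMap (ZMod q) L)).Monic := hmonic.map _
  obtain ⟨c, hc⟩ := hPdvd
  have hc0 : c ≠ 0 := by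
    rintro rfl
    rw [mul_zero] at hc
    exact hmap.ne_zero hc
  have hcdeg : c.natDegree = 0 := by
    have h2 := natDegree_mul hPmonic.ne_zero hc0
    rw [← hc, hmonic.natDegree_map, hdeg, hPdeg] at h2
    omega
  have hcmonic : c.Monic := by
    have h3 := congrArg leadingCoeff hc
    rw [leadingCoeff_mul, hPmonic.leadingCoeff, one_mul, hmap.leadingCoeff] at h3
    exact h3.symm
  rw [hc, eq_one_of_monic_natDegree_zero hcmonic hcdeg, mul_one]

end Aux

/-- **Meyn.** Let `ℓ` be an odd prime and `f` a self-reciprocal monic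
polynomial of even degree `N` over `F_ℓ`, written as `f(x) = x^{N/2} h(x + x⁻¹)` with `h`
monic of degree `N/2` (equivalently, `f = ∑_i h_i · x^{N/2−i} (x²+1)^i`). If `f` is
irreducible over `F_ℓ`, then `h` is irreducible and `h(2)·h(−2)` is a nonsquare in `F_ℓ`. -/
theorem meyn_irreducible_selfReciprocal
    (ℓ : ℕ) [Fact ℓ.Prime] (hℓodd : Odd ℓ)
    (N : ℕ) (hN : Even N) (hNpos : 0 < N)
    (f h : Polynomial (ZMod ℓ))
    (hfmonic : f.Monic) (hfdeg : f.natDegree = N)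
    (hfself : Polynomial.reflect N f = f)
    (hhmonic : h.Monic) (hhdeg : h.natDegree = N / 2)
    (hfh : f = ∑ i ∈ Finset.range (N / 2 + 1),
        Polynomial.C (h.coeff i) * Polynomial.X ^ (N / 2 - i) *
          (Polynomial.X ^ 2 + 1) ^ i)
    (hirr : Irreducible f) :
    Irreducible h ∧ ¬ IsSquare (h.eval 2 * h.eval (-2)) := by
  classical
  have hq : ℓ.Prime := Fact.out
  obtain ⟨n2, hn2⟩ := hN
  set m := N / 2 with hm_def
  have hNm : N = 2 * m := by omega
  have hm : 0 < m := by omega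
  haveI : Fact (Irreducible f) := ⟨hirr⟩
  set K := AdjoinRoot f with hK
  set α : K := AdjoinRoot.root f with hα
  have hfa : aeval α f = 0 := by
    rw [hα, AdjoinRoot.aeval_eq, AdjoinRoot.mk_self]
  have hcoeff0 : f.coeff 0 = 1 := by
    have h1 := congrArg (fun p => Polynomial.coeff p 0) hfself
    simp only [coeff_reflect, revAt_le, Nat.zero_le, tsub_zero] at h1
    rw [← h1, ← hfdeg]
    exact hfmonic
  have hα0 : α ≠ 0 := by
    intro h0
    rw [h0, aeval_def, eval₂_at_zero, hcoeff0, map_one] at hfa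
    exact one_ne_zero hfa
  obtain ⟨β, hβ_def⟩ : ∃ β : K, β = α + α⁻¹ := ⟨_, rfl⟩
  have hαβ : α * β = α ^ 2 + 1 := by
    rw [hβ_def, mul_add, mul_inv_cancel₀ hα0]; ring
  have hfa2 : aeval α (∑ i ∈ Finset.range (m + 1),
      Polynomial.C (h.coeff i) * Polynomial.X ^ (m - i) *
        (Polynomial.X ^ 2 + 1) ^ i) = 0 := by
    rw [← hfh]; exact hfa
  have hfeval : aeval α (∑ i ∈ Finset.range (m + 1),
      Polynomial.C (h.coeff i) * Polynomial.X ^ (m - i) *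
        (Polynomial.X ^ 2 + 1) ^ i) = α ^ m * aeval β h := by
    rw [map_sum, aeval_eq_sum_range' (n := m + 1) (by omega) β, Finset.mul_sum]
    apply Finset.sum_congr rfl
    intro i hi
    rw [mem_range, Nat.lt_succ_iff] at hi
    simp only [map_mul, map_pow, aeval_C, aeval_X, map_add, map_one, Algebra.smul_def]
    have hpow : α ^ (m - i) * α ^ i = α ^ m := by
      rw [← pow_add, Nat.sub_add_cancel hi]
    rw [← hαβ, mul_pow]
    linear_combination (algebraMap (ZMod ℓ) K (h.coeff i) * β ^ i) * hpow
  have hβroot : aeval β h = 0 := by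
    rw [hfeval] at hfa2
    rcases mul_eq_zero.mp hfa2 with h1 | h1
    · exact absurd ((pow_eq_zero_iff hm.ne').mp h1) hα0
    · exact h1
  haveI hfinK : FiniteDimensional (ZMod ℓ) K :=
    (AdjoinRoot.powerBasis hfmonic.ne_zero).finite
  have hfinrank : Module.finrank (ZMod ℓ) K = N := by
    rw [(AdjoinRoot.powerBasis hfmonic.ne_zero).finrank, AdjoinRoot.powerBasis_dim, hfdeg]
  have hintβ : IsIntegral (ZMod ℓ) β := IsIntegral.of_finite _ _
  set L : IntermediateField (ZMod ℓ) K := IntermediateField.adjoin (ZMod ℓ) {β} with hL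
  have hLrank : Module.finrank (ZMod ℓ) L = (minpoly (ZMod ℓ) β).natDegree :=
    IntermediateField.adjoin.finrank hintβ
  have hdvd : minpoly (ZMod ℓ) β ∣ h := minpoly.dvd _ _ hβroot
  have hmle : (minpoly (ZMod ℓ) β).natDegree ≤ m :=
    hhdeg ▸ natDegree_le_of_dvd hdvd hhmonic.ne_zero
  set b : L := AdjoinSimple.gen (ZMod ℓ) β with hb
  have hbK : algebraMap L K b = β := IntermediateField.AdjoinSimple.algebraMap_gen _ _
  have htopα : IntermediateField.adjoin (ZMod ℓ) ({α} : Set K) = ⊤ :=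
    IntermediateField.adjoin_root_eq_top f
  -- upper bound for [K : L]
  have hLK2 : Module.finrank (↥L) K ≤ 2 := by
    have hintα : IsIntegral (↥L) α := IsIntegral.of_finite _ _
    have hLtop : IntermediateField.adjoin (↥L) ({α} : Set K) = ⊤ := by
      apply IntermediateField.restrictScalars_injective (ZMod ℓ)
      rw [IntermediateField.restrictScalars_top, IntermediateField.restrictScalars_adjoin]
      rw [eq_top_iff, ← htopα]
      exact IntermediateField.adjoin.mono _ _ _ Set.subset_union_right
    have h1 : Module.finrank (↥L) K = (minpoly (↥L) α).natDegree := by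
      rw [← IntermediateField.finrank_top' (F := ↥L) (E := K), ← hLtop,
        IntermediateField.adjoin.finrank hintα]
    set p : (↥L)[X] := C 1 * X ^ 2 + C (-b) * X + C 1 with hp
    have hpdeg : p.natDegree = 2 := natDegree_quadratic one_ne_zero
    have hpne : p ≠ 0 := by
      intro h0; rw [h0, natDegree_zero] at hpdeg; omega
    have hpα : aeval α p = 0 := by
      simp only [hp, map_add, map_mul, map_pow, aeval_C, aeval_X, map_one, map_neg]
      rw [hbK]
      linear_combination -hαβ
    have hd := minpoly.degree_le_of_ne_zero (↥L) α hpne hpα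
    rw [hp, degree_quadratic one_ne_zero] at hd
    rw [h1]
    exact_mod_cast natDegree_le_iff_degree_le.mpr hd
  have htower : Module.finrank (ZMod ℓ) (↥L) * Module.finrank (↥L) K
      = Module.finrank (ZMod ℓ) K := Module.finrank_mul_finrank _ _ _
  have hLpos : 0 < Module.finrank (ZMod ℓ) (↥L) := Module.finrank_pos
  have hKL2 : Module.finrank (ZMod ℓ) (↥L) = m ∧ Module.finrank (↥L) K = 2 := by
    set a := Module.finrank (ZMod ℓ) (↥L)
    set r := Module.finrank (↥L) K
    have e1 : a * r = 2 * m := by rw [htower, hfinrank, hNm]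
    have e3 : a ≤ m := hLrank ▸ hmle
    have e2 : a * r ≤ a * 2 := Nat.mul_le_mul_left a hLK2
    rw [e1] at e2
    have e4 : a = m := le_antisymm e3 (by linarith)
    refine ⟨e4, ?_⟩
    rw [e4] at e1
    exact Nat.eq_of_mul_eq_mul_left hm (by linarith)
  have hminh : minpoly (ZMod ℓ) β = h := by
    have hdeg' : (minpoly (ZMod ℓ) β).natDegree = m := by rw [← hLrank]; exact hKL2.1
    obtain ⟨c, hc⟩ := hdvd
    have hmono := minpoly.monic hintβ
    have hc0 : c ≠ 0 := by
      rintro rfl; rw [mul_zero] at hc; exact hhmonic.ne_zero hc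
    have hcd : c.natDegree = 0 := by
      have h2 := natDegree_mul hmono.ne_zero hc0
      rw [← hc, hhdeg, hdeg'] at h2
      omega
    have hcm : c.Monic := by
      have h3 := congrArg leadingCoeff hc
      rw [leadingCoeff_mul, hmono.leadingCoeff, one_mul, hhmonic.leadingCoeff] at h3
      exact h3.symm
    rw [hc, eq_one_of_monic_natDegree_zero hcm hcd, mul_one]
  have hirrh : Irreducible h := hminh ▸ minpoly.irreducible hintβ
  refine ⟨hirrh, ?_⟩
  rintro ⟨s, hs⟩
  -- finite field instances
  haveI : Finite (↥L) := Module.finite_of_finite (ZMod ℓ)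
  haveI : Fintype (↥L) := Fintype.ofFinite _
  have hcardL : Fintype.card (↥L) = ℓ ^ m := by
    rw [Module.card_eq_pow_finrank (K := ZMod ℓ), ZMod.card, hKL2.1]
  have hminb : minpoly (ZMod ℓ) b = h := by
    rw [← hminh, ← hbK]
    exact (minpoly.algHom_eq (IsScalarTower.toAlgHom (ZMod ℓ) (↥L) K)
      (algebraMap (↥L) K).injective b).symm
  have htopb : Algebra.adjoin (ZMod ℓ) ({b} : Set (↥L)) = ⊤ :=
    (IntermediateField.adjoin.powerBasis hintβ).adjoin_gen_eq_top
  obtain ⟨hdist, hprod⟩ := map_minpoly_eq_prod ℓ (↥L) m hm b h hhmonic hhdeg hminb hcardL htopb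
  -- the norm computation
  have hEval : ∀ c : ZMod ℓ, (algebraMap (ZMod ℓ) (↥L) c - b) ^ (∑ i ∈ range m, ℓ ^ i)
      = algebraMap (ZMod ℓ) (↥L) (h.eval c) := by
    intro c
    rw [← Finset.prod_pow_eq_pow_sum]
    have hterm : ∀ i ∈ range m, (algebraMap (ZMod ℓ) (↥L) c - b) ^ ℓ ^ i
        = algebraMap (ZMod ℓ) (↥L) c - b ^ ℓ ^ i := by
      intro i _
      have hcfix : (algebraMap (ZMod ℓ) (↥L) c) ^ ℓ ^ i = algebraMap (ZMod ℓ) (↥L) c := by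
        rw [← map_pow, ZMod.pow_card_pow]
      have h2 := map_sub (frobAlg ℓ (↥L) i) (algebraMap (ZMod ℓ) (↥L) c) b
      simp only [frobAlg_apply] at h2
      rw [h2, hcfix]
    rw [Finset.prod_congr rfl hterm]
    have h3 : eval (algebraMap (ZMod ℓ) (↥L) c) (h.map (algebraMap (ZMod ℓ) (↥L)))
        = algebraMap (ZMod ℓ) (↥L) (h.eval c) := by
      rw [eval_map, eval₂_at_apply]
    rw [← h3, hprod, eval_prod]
    apply Finset.prod_congr rfl
    intro i _
    rw [eval_sub, eval_X, eval_C]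
  -- the square argument
  set E := ∑ i ∈ range m, ℓ ^ i with hE
  have hgeo : E * (ℓ - 1) = ℓ ^ m - 1 := geom_sum_mul_of_one_le hq.one_lt.le m
  obtain ⟨k, hk⟩ := hℓodd
  have hodd1 : ℓ - 1 = 2 * k := by omega
  set u : ↥L := (algebraMap (ZMod ℓ) (↥L) 2 - b) * (algebraMap (ZMod ℓ) (↥L) (-2) - b)
    with hu
  have huE : u ^ E = algebraMap (ZMod ℓ) (↥L) (h.eval 2 * h.eval (-2)) := by
    rw [hu, mul_pow, hEval 2, hEval (-2), map_mul]
  have hEne : E ≠ 0 := by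
    intro e0
    rw [e0, zero_mul] at hgeo
    have hpow1 : 1 < ℓ ^ m := Nat.one_lt_pow hm.ne' hq.one_lt
    obtain ⟨A, hA⟩ : ∃ A, ℓ ^ m = A := ⟨_, rfl⟩
    rw [hA] at hgeo hpow1
    omega
  haveI hcharL : CharP (↥L) ℓ := charP_of_injective_algebraMap' (ZMod ℓ) (A := ↥L) ℓ
  have hℓ2 : ℓ ≠ 2 := by omega
  have hsqu : IsSquare u := by
    rcases eq_or_ne u 0 with h0 | h0
    · exact h0 ▸ ⟨0, (mul_zero 0).symm⟩
    · have hchar : ringChar (↥L) ≠ 2 := by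
        rw [← ringChar.eq (↥L) ℓ] at hℓ2
        exact hℓ2
      rw [FiniteField.isSquare_iff hchar h0]
      have hs0 : s ≠ 0 := by
        rintro rfl
        rw [hs, mul_zero, map_zero] at huE
        exact h0 ((pow_eq_zero_iff hEne).mp huE)
      have hcard2 : Fintype.card (↥L) / 2 = E * k := by
        rw [hcardL]
        obtain ⟨A, hA⟩ : ∃ A, ℓ ^ m = A := ⟨_, rfl⟩
        obtain ⟨B, hB⟩ : ∃ B, E * k = B := ⟨_, rfl⟩
        have h1 : A - 1 = 2 * B := by rw [← hA, ← hB, ← hgeo, hodd1]; ring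
        have h2 : Odd A := by rw [← hA]; exact Odd.pow ⟨k, hk⟩
        obtain ⟨z, hz⟩ := h2
        rw [hA, hB]
        omega
      rw [hcard2, pow_mul, huE, hs, ← map_pow]
      have h4 : (s * s) ^ k = s ^ (ℓ - 1) := by rw [hodd1, pow_mul, pow_two]
      rw [h4, ZMod.pow_card_sub_one_eq_one hs0, map_one]
  obtain ⟨w, hw⟩ := hsqu
  have hβL : β ∈ L := IntermediateField.mem_adjoin_simple_self (ZMod ℓ) β
  set τ : K := algebraMap (↥L) K w with hτdef
  have hτL : τ ∈ L := w.2
  have halgu : algebraMap (↥L) K u = β ^ 2 - 4 := by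
    rw [hu, map_mul, map_sub, map_sub, hbK,
      ← IsScalarTower.algebraMap_apply, ← IsScalarTower.algebraMap_apply]
    simp only [map_neg, map_ofNat]
    ring
  have h6 : τ ^ 2 = β ^ 2 - 4 := by
    rw [hτdef, ← map_pow, pow_two, ← hw, halgu]
  have h5 : (2 * α - β) ^ 2 = τ ^ 2 := by
    linear_combination (-1 : K) * h6 + (-4 : K) * hαβ
  have hfac : (2 * α - β - τ) * (2 * α - β + τ) = 0 := by
    linear_combination h5
  have h2K : (2 : K) ≠ 0 := by
    haveI : CharP K ℓ := charP_of_injective_algebraMap' (ZMod ℓ) (A := K) ℓ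
    apply Ring.two_ne_zero
    rw [← ringChar.eq K ℓ] at hℓ2
    exact hℓ2
  have h2L : (2 : K) ∈ L := by
    have hn : ((2 : ℕ) : K) ∈ L := IntermediateField.natCast_mem L 2
    simpa using hn
  have hαL : α ∈ L := by
    rcases mul_eq_zero.mp hfac with h1 | h1
    · have hα_eq : α = (β + τ) * (2 : K)⁻¹ := by
        rw [eq_mul_inv_iff_mul_eq₀ h2K]
        linear_combination h1
      rw [hα_eq]
      exact mul_mem (add_mem hβL hτL) (inv_mem h2L)
    · have hα_eq : α = (β - τ) * (2 : K)⁻¹ := by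
        rw [eq_mul_inv_iff_mul_eq₀ h2K]
        linear_combination h1
      rw [hα_eq]
      exact mul_mem (sub_mem hβL hτL) (inv_mem h2L)
  have hLe : IntermediateField.adjoin (ZMod ℓ) ({α} : Set K) ≤ L :=
    IntermediateField.adjoin_le_iff.mpr (by intro y hy; rcases hy with rfl; exact hαL)
  rw [htopα] at hLe
  have hLtop : L = ⊤ := top_le_iff.mp hLe
  have hfr : Module.finrank (ZMod ℓ) (↥L) = N := by
    rw [hLtop, IntermediateField.finrank_top', hfinrank]
  rw [hKL2.1] at hfr
  omega
end

section
/- Let G be a discrete group, G^g a normal subgroup, S a symmetric generating set of G^g admitting a relation s₁⋯s_c = 1 of odd length c. Let (p_s)_{s∈S} be strictly positive with ∑ p_s = 1 and p_{s⁻¹} = p_s, and let π: G^g → U(V) be a finite-dimensional unitary representation. Set M = ∑_{s∈S} p_s π(s) ∈ End(V). Then M is self-adjoint and its smallest eigenvalue is at least −1 + δ⁻ where δ⁻ = (2/c²)·min{p_{s_i} : 1 ≤ i ≤ c} > 0; equivalently, ‖v‖² ≤ (c²/2)·(min_i p_{s_i})⁻¹·⟨(Id + M)v, v⟩ for all v ∈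 V. -/
open scoped InnerProductSpace

private lemma telescope_sum' {V : Type*} [AddCommGroup V] [Module ℝ V]
    (f : ℕ → V) (n : ℕ) :
    ∑ k ∈ Finset.range n, ((-1 : ℝ)) ^ k • (f k + f (k + 1))
      = f 0 - ((-1 : ℝ)) ^ n • f n := by
  induction n with
  | zero => simp
  | succ n ih =>
    rw [Finset.sum_range_succ, ih, pow_succ]
    module

/-- Let `G` be a discrete group, `G^g` a normal subgroup, `S ⊆ G^g` a
symmetric generating set admitting a relation `s₁ ⋯ s_c = 1` of odd length `c`, and
`(p_s)` a symmetric, strictly positive probability distribution supported on `S`. Let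
`π` be a finite-dimensional unitary representation of `G^g` and
`M = ∑_s p_s π(s)` the averaging operator. Then `M` is self-adjoint and
`‖v‖² ≤ (c²/2)·(min_i p_{s_i})⁻¹ · ⟨(Id + M)v, v⟩` for every `v`
(so the smallest eigenvalue of `M` is at least `−1 + (2/c²)·min_i p_{s_i}`). -/
theorem averaging_operator_lower_spectral_bound
    {G : Type*} [Group G] (Gg : Subgroup G) [Gg.Normal]
    (S : Set Gg) (hsym : ∀ s ∈ S, s⁻¹ ∈ S) (hgen : Subgroup.closure S = ⊤)
    (p : Gg → ℝ) (hpos : ∀ s ∈ S, 0 < p s) (hsupp : ∀ s ∉ S, p s = 0)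
    (hpsym : ∀ s : Gg, p s⁻¹ = p s) (hsum : HasSum p 1)
    {V : Type*} [NormedAddCommGroup V] [InnerProductSpace ℂ V] [FiniteDimensional ℂ V]
    (π : Gg →* (V ≃ₗᵢ[ℂ] V))
    (c : ℕ) (hc : Odd c) (hc1 : 1 ≤ c)
    (s : Fin c → Gg) (hsS : ∀ i, s i ∈ S) (hrel : (List.ofFn s).prod = 1)
    (M : V → V) (hM : ∀ v : V, M v = ∑' t : Gg, p t • (π t v)) :
    (∀ v w : V, ⟪M v, w⟫_ℂ = ⟪v, M w⟫_ℂ) ∧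
    (∀ v : V, ‖v‖ ^ 2 ≤
      ((c : ℝ) ^ 2 / 2) * (sInf (Set.range fun i => p (s i)))⁻¹ *
        RCLike.re (⟪v + M v, v⟫_ℂ)) := by
  classical
  have hpnn : ∀ t : Gg, 0 ≤ p t := by
    intro t
    by_cases h : t ∈ S
    · exact (hpos t h).le
    · exact (hsupp t h).ge
  have hinner_r : ∀ (x y : V) (r : ℝ), ⟪x, r • y⟫_ℂ = (r : ℂ) * ⟪x, y⟫_ℂ := by
    intro x y r; rw [← Complex.coe_smul, inner_smul_right]
  have hinner_l : ∀ (x y : V) (r : ℝ), ⟪r • x, y⟫_ℂ = (r : ℂ) * ⟪x, y⟫_ℂ := by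
    intro x y r; rw [← Complex.coe_smul, inner_smul_left, Complex.conj_ofReal]
  have hMsum : ∀ v : V, HasSum (fun t : Gg => p t • (π t v)) (M v) := by
    intro v
    rw [hM]
    refine (Summable.of_norm ?_).hasSum
    have : (fun t : Gg => ‖p t • (π t v)‖) = fun t => p t * ‖v‖ := by
      funext t
      rw [norm_smul, Real.norm_eq_abs, abs_of_nonneg (hpnn t),
        LinearIsometryEquiv.norm_map]
    rw [this]
    exact (hsum.summable.mul_right ‖v‖)
  -- inner product of M with a fixed vector, right slot
  have hIR : ∀ v w : V, HasSum (fun t : Gg => (p t : ℂ) * ⟪v, π t w⟫_ℂ) ⟪v, M w⟫_ℂ := by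
    intro v w
    have := (hMsum w).mapL (innerSL ℂ v)
    simpa [hinner_r] using this
  -- inner product of M with a fixed vector, left slot
  have hIL : ∀ v w : V, HasSum (fun t : Gg => (p t : ℂ) * ⟪π t v, w⟫_ℂ) ⟪M v, w⟫_ℂ := by
    intro v w
    have h1 := (hIR w v).star
    have h2 : (fun t : Gg => star ((p t : ℂ) * ⟪w, π t v⟫_ℂ))
        = fun t : Gg => (p t : ℂ) * ⟪π t v, w⟫_ℂ := by
      funext t
      simp [star_mul', Complex.star_def, Complex.conj_ofReal, inner_conj_symm]
    rw [h2] at h1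
    rwa [show star (⟪w, M v⟫_ℂ) = ⟪M v, w⟫_ℂ by
      simp [Complex.star_def, inner_conj_symm]] at h1
  have hselfadj : ∀ v w : V, ⟪M v, w⟫_ℂ = ⟪v, M w⟫_ℂ := by
    intro v w
    have h1 : ∀ t : Gg, ⟪π t v, w⟫_ℂ = ⟪v, π t⁻¹ w⟫_ℂ := by
      intro t
      conv_lhs => rw [show w = π t (π t⁻¹ w) by
        rw [map_inv]; simp [LinearIsometryEquiv.coe_inv]]
      rw [LinearIsometryEquiv.inner_map_map]
    have h2 : HasSum (fun t : Gg => (p t : ℂ) * ⟪v, π t⁻¹ w⟫_ℂ) ⟪M v, w⟫_ℂ := by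
      simpa [h1] using hIL v w
    have h3 : HasSum ((fun t : Gg => (p t : ℂ) * ⟪v, π t⁻¹ w⟫_ℂ) ∘ (Equiv.inv Gg))
        ⟪M v, w⟫_ℂ := ((Equiv.inv Gg).hasSum_iff).mpr h2
    have h4 : ((fun t : Gg => (p t : ℂ) * ⟪v, π t⁻¹ w⟫_ℂ) ∘ (Equiv.inv Gg))
        = fun t : Gg => (p t : ℂ) * ⟪v, π t w⟫_ℂ := by
      funext t
      simp [Function.comp, Equiv.inv, hpsym]
    rw [h4] at h3
    exact h3.unique (hIR v w)
  refine ⟨hselfadj, ?_⟩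
  intro v
  set m := sInf (Set.range fun i => p (s i)) with hm
  set R := RCLike.re (⟪v + M v, v⟫_ℂ) with hR
  -- facts about m
  have hfin : (Set.range fun i => p (s i)).Finite := Set.finite_range _
  have hne : (Set.range fun i => p (s i)).Nonempty := by
    have : Nonempty (Fin c) := ⟨⟨0, hc1⟩⟩
    exact Set.range_nonempty _
  have hm_mem := hne.csInf_mem hfin
  have hm_pos : 0 < m := by
    obtain ⟨i, hi⟩ := hm_mem
    rw [hm, ← hi]
    exact hpos _ (hsS i)
  have hm_le : ∀ i : Fin c, m ≤ p (s i) := fun i =>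
    csInf_le hfin.bddBelow ⟨i, rfl⟩
  -- the key HasSum identity for R
  have hre : HasSum (fun t : Gg => p t * RCLike.re (⟪π t v, v⟫_ℂ))
      (RCLike.re (⟪M v, v⟫_ℂ)) := by
    have := (hIL v v).mapL Complex.reCLM
    simpa using this
  have hRsum : HasSum (fun t : Gg => p t * ((1/2) * ‖v + π t v‖ ^ 2)) R := by
    have h1 := (hsum.mul_right (‖v‖ ^ 2)).add hre
    have h2 : (fun t : Gg => p t * ‖v‖ ^ 2 + p t * RCLike.re (⟪π t v, v⟫_ℂ))
        = fun t : Gg => p t * ((1/2) * ‖v + π t v‖ ^ 2) := by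
      funext t
      have hn : ‖v + π t v‖ ^ 2
          = ‖v‖ ^ 2 + 2 * RCLike.re (⟪v, π t v⟫_ℂ) + ‖π t v‖ ^ 2 :=
        norm_add_sq v (π t v)
      rw [LinearIsometryEquiv.norm_map, inner_re_symm] at hn
      rw [hn]; ring
    have h3 : (1 : ℝ) * ‖v‖ ^ 2 + RCLike.re (⟪M v, v⟫_ℂ) = R := by
      rw [hR, inner_add_left, map_add, one_mul]
      congr 1
      simp [inner_self_eq_norm_sq, ← Complex.ofReal_pow]
    rw [h2, h3] at h1
    exact h1
  have hterm_nn : ∀ t : Gg, 0 ≤ p t * ((1/2) * ‖v + π t v‖ ^ 2) := by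
    intro t; exact mul_nonneg (hpnn t) (by positivity)
  have hRnn : 0 ≤ R := hasSum_le (fun t => hterm_nn t) hasSum_zero hRsum
  -- per-generator bound
  have hAi : ∀ i : Fin c, ‖v + π (s i) v‖ ^ 2 ≤ 2 * m⁻¹ * R := by
    intro i
    have h1 : p (s i) * ((1/2) * ‖v + π (s i) v‖ ^ 2) ≤ R :=
      le_hasSum hRsum (s i) (fun t _ => hterm_nn t)
    have h2 : m * ((1/2) * ‖v + π (s i) v‖ ^ 2) ≤ R :=
      le_trans (by nlinarith [hm_le i, sq_nonneg ‖v + π (s i) v‖]) h1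
    have h3 : ‖v + π (s i) v‖ ^ 2 * m ≤ 2 * R := by nlinarith [h2]
    have h4 : ‖v + π (s i) v‖ ^ 2 ≤ (2 * R) / m := (le_div_iff₀ hm_pos).mpr h3
    have h5 : (2 * R) / m = 2 * m⁻¹ * R := by rw [div_eq_mul_inv]; ring
    linarith [h4, h5.le]
  -- telescoping
  set g : ℕ → Gg := fun k => ((List.ofFn s).take k).prod with hg
  set f : ℕ → V := fun k => π (g k) v with hf
  have hf0 : f 0 = v := by simp [hf, hg]
  have hfc : f c = v := by
    have : g c = 1 := by
      rw [hg]
      simp only []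
      rw [List.take_of_length_le (by simp), hrel]
    simp [hf, this]
  have hstep : ∀ i : Fin c, f ((i : ℕ) + 1) = π (g i) (π (s i) v) := by
    intro i
    have hlen : (i : ℕ) < (List.ofFn s).length := by simp [i.isLt]
    have h1 : g ((i : ℕ) + 1) = g i * s i := by
      rw [hg]
      simp only []
      rw [List.prod_take_succ _ _ hlen]
      congr 1
      simp
    rw [hf]
    simp only [h1, map_mul]
    rfl
  have htel : ∑ k ∈ Finset.range c, ((-1 : ℝ)) ^ k • (f k + f (k + 1)) = v + v := by
    rw [telescope_sum' f c, hf0, hfc, Odd.neg_one_pow hc]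
    module
  -- norm bound  2‖v‖ ≤ ∑ ‖v + π (s i) v‖
  have hnormsum : 2 * ‖v‖ ≤ ∑ i : Fin c, ‖v + π (s i) v‖ := by
    have h1 : ‖v + v‖ = 2 * ‖v‖ := by
      rw [show v + v = (2 : ℝ) • v by module, norm_smul]
      simp
    have h2 : ∑ k ∈ Finset.range c, ((-1 : ℝ)) ^ k • (f k + f (k + 1))
        = ∑ i : Fin c, ((-1 : ℝ)) ^ (i : ℕ) • (f i + f ((i : ℕ) + 1)) :=
      (Fin.sum_univ_eq_sum_range (fun k => ((-1 : ℝ)) ^ k • (f k + f (k + 1))) c).symm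
    calc 2 * ‖v‖ = ‖∑ i : Fin c, ((-1 : ℝ)) ^ (i : ℕ) • (f i + f ((i : ℕ) + 1))‖ := by
          rw [← h2, htel, h1]
      _ ≤ ∑ i : Fin c, ‖((-1 : ℝ)) ^ (i : ℕ) • (f i + f ((i : ℕ) + 1))‖ :=
          norm_sum_le _ _
      _ = ∑ i : Fin c, ‖v + π (s i) v‖ := by
          refine Finset.sum_congr rfl fun i _ => ?_
          rw [norm_smul]
          simp only [norm_pow, Real.norm_eq_abs, abs_neg, abs_one, one_pow, one_mul]
          rw [hstep i]
          have : f (i : ℕ) + π (g i) (π (s i) v) = π (g i) (v + π (s i) v) := by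
            rw [hf]; simp [map_add]
          rw [this, LinearIsometryEquiv.norm_map]
  -- Cauchy–Schwarz and conclusion
  have hCS : (∑ i : Fin c, ‖v + π (s i) v‖) ^ 2
      ≤ (c : ℝ) * ∑ i : Fin c, ‖v + π (s i) v‖ ^ 2 := by
    have := sq_sum_le_card_mul_sum_sq (s := (Finset.univ : Finset (Fin c)))
      (f := fun i => ‖v + π (s i) v‖)
    simpa using this
  have hsum2 : ∑ i : Fin c, ‖v + π (s i) v‖ ^ 2 ≤ (c : ℝ) * (2 * m⁻¹ * R) := by
    calc ∑ i : Fin c, ‖v + π (s i) v‖ ^ 2 ≤ ∑ _i : Fin c, 2 * m⁻¹ * R :=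
          Finset.sum_le_sum fun i _ => hAi i
      _ = (c : ℝ) * (2 * m⁻¹ * R) := by simp [mul_comm]
  have hfinal : (2 * ‖v‖) ^ 2 ≤ (c : ℝ) * ((c : ℝ) * (2 * m⁻¹ * R)) := by
    calc (2 * ‖v‖) ^ 2 ≤ (∑ i : Fin c, ‖v + π (s i) v‖) ^ 2 := by
          have h0 : 0 ≤ 2 * ‖v‖ := by positivity
          exact pow_le_pow_left₀ h0 hnormsum 2
      _ ≤ (c : ℝ) * ∑ i : Fin c, ‖v + π (s i) v‖ ^ 2 := hCS
      _ ≤ (c : ℝ) * ((c : ℝ) * (2 * m⁻¹ * R)) := by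
          exact mul_le_mul_of_nonneg_left hsum2 (by positivity)
  nlinarith [hfinal, norm_nonneg v]
end
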